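/- For every α ∈ [0, π], sin(α) - α * cos(α) ≥ (α / π)^3. -/

import Mathlib

open Real

lemma sin_ge_sub_cube' {x : ℝ} (hx : 0 ≤ x) : x - x ^ 3 / 6 ≤ Real.sin x := by
  have key : MonotoneOn (fun y : ℝ => Real.sin y - y + y ^ 3 / 6) (Set.Ici 0) := by
    apply monotoneOn_of_deriv_nonneg (convex_Ici 0)
    · exact (Real.continuous_sin.sub continuous_id).add
        ((continuous_pow 3).div_const 6) |>.continuousOn
    · intro y hy
      exact ((Real.differentiable_sin.sub differentiable_id).add
        ((differentiable_pow 3).div_const 6)).differentiableAt.differentiableWithinAt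
    · intro y hy
      have h : HasDerivAt (fun y : ℝ => Real.sin y - y + y ^ 3 / 6)
          (Real.cos y - 1 + 3 * y ^ 2 / 6) y := by
        exact (((Real.hasDerivAt_sin y).sub (hasDerivAt_id y)).add
          (((hasDerivAt_pow 3 y)).div_const 6)).congr_deriv (by norm_num)
      rw [h.deriv]
      have := Real.one_sub_sq_div_two_le_cos (x := y)
      nlinarith
  have h0 : (0 : ℝ) ∈ Set.Ici (0 : ℝ) := Set.mem_Ici.mpr le_rfl
  have := key h0 (Set.mem_Ici.mpr hx) hx
  simp at this
  linarith

theorem stmt_2 : ∀ α ∈ Set.Icc (0 : ℝ) π,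
    Real.sin α - α * Real.cos α ≥ (α / π) ^ 3 := by
  intro α ⟨h0, hπ⟩
  have hpi := Real.pi_pos
  have hsin : α - α ^ 3 / 6 ≤ Real.sin α := sin_ge_sub_cube' h0
  have hcos : Real.cos α ≤ 1 - 2 / π ^ 2 * α ^ 2 :=
    Real.cos_le_one_sub_mul_cos_sq (by rw [abs_of_nonneg h0]; exact hπ)
  have hnum : 2 * π - π ^ 3 / 6 ≥ 1 := by
    nlinarith [Real.pi_gt_d6, Real.pi_lt_d2]
  have hα3 : 0 ≤ α ^ 3 := by positivity
  rw [ge_iff_le, div_pow, div_le_iff₀ (by positivity)]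
  have hmul : α * Real.cos α ≤ α * (1 - 2 / π ^ 2 * α ^ 2) :=
    mul_le_mul_of_nonneg_left hcos h0
  have key : α ^ 3 * (2 / π ^ 2 - 1 / 6) ≤ Real.sin α - α * Real.cos α := by
    have : α - α ^ 3 / 6 - α * (1 - 2 / π ^ 2 * α ^ 2) = α ^ 3 * (2 / π ^ 2 - 1 / 6) := by
      ring
    nlinarith
  refine le_trans ?_ (mul_le_mul_of_nonneg_right key (by positivity : (0:ℝ) ≤ π ^ 3))
  rw [mul_assoc]
  have : (2 / π ^ 2 - 1 / 6) * π ^ 3 = 2 * π - π ^ 3 / 6 := by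
    field_simp
  nlinarith
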